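/- Every Bezout-G-graded commutative ring is an EM-G-graded ring; that is, if every finitely generated G-graded ideal of R is principal, then every nonzero homogeneous zero-divisor polynomial in R[x] has an annihilating content. -/

import Mathlib

open Polynomial

/-- `R` (with grading `𝒜`) is an EM-`G`-graded ring. -/
def IsEMGGraded {G R : Type*} [CommRing R] (𝒜 : G → AddSubgroup R) : Prop :=
  ∀ f : R[X], f ≠ 0 → (∃ σ : G, ∀ i, f.coeff i ∈ 𝒜 σ) → f ∉ nonZeroDivisors R[X] →
    ∃ (c : R) (g : R[X]), c ∉ nonZeroDivisors R ∧ g ∈ nonZeroDivisors R[X] ∧ f = C c * g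

/-- Every Bezout-`G`-graded ring (every finitely generated `G`-graded ideal
is principal) is an EM-`G`-graded ring. -/
theorem stmt_11 {G R : Type*} [AddGroup G] [DecidableEq G] [CommRing R]
    (𝒜 : G → AddSubgroup R) [GradedRing 𝒜]
    (hBezout : ∀ I : Ideal R, I.FG → Ideal.IsHomogeneous 𝒜 I → ∃ a : R, I = Ideal.span {a}) :
    IsEMGGraded 𝒜 := by
  rintro f hf0 ⟨σ, hσ⟩ hfz
  classical
  set I : Ideal R := Ideal.span (Set.range f.coeff) with hI
  -- I is finitely generated
  have hFG : I.FG := by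
    refine ⟨Finset.image f.coeff (Finset.range (f.natDegree + 1)), le_antisymm ?_ ?_⟩
    · apply Ideal.span_mono
      intro x hx
      simp only [Finset.coe_image, Set.mem_image] at hx
      obtain ⟨i, _, rfl⟩ := hx
      exact ⟨i, rfl⟩
    · rw [Ideal.span_le]
      rintro x ⟨i, rfl⟩
      by_cases hi : i ≤ f.natDegree
      · exact Ideal.subset_span (by
          simp only [Finset.coe_image, Set.mem_image]
          exact ⟨i, by simpa using Nat.lt_succ_of_le hi, rfl⟩)
      · rw [f.coeff_eq_zero_of_natDegree_lt (lt_of_not_ge hi)]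
        exact Ideal.zero_mem _
  -- I is homogeneous
  have hHom : Ideal.IsHomogeneous 𝒜 I :=
    Ideal.homogeneous_span 𝒜 _ (by rintro x ⟨i, rfl⟩; exact ⟨σ, hσ i⟩)
  obtain ⟨a, ha⟩ := hBezout I hFG hHom
  -- every coefficient of f is a multiple of a
  have hdvd : ∀ i, a ∣ f.coeff i := fun i =>
    Ideal.mem_span_singleton.mp (ha ▸ Ideal.subset_span ⟨i, rfl⟩)
  obtain ⟨g, hg⟩ := (C_dvd_iff_dvd_coeff a f).mpr hdvd
  have hcoe : ∀ i, f.coeff i = a * g.coeff i := fun i => by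
    rw [hg, coeff_C_mul]
  -- a is a combination of the coefficients
  have haI : a ∈ I := ha ▸ Ideal.subset_span rfl
  rw [hI, Ideal.span, Finsupp.mem_span_range_iff_exists_finsupp] at haI
  obtain ⟨c, hc⟩ := haI
  set t : R := c.sum fun i r => r * g.coeff i with ht
  have hat : a * t = a := by
    conv_rhs => rw [← hc]
    rw [ht, Finsupp.sum, Finsupp.sum, Finset.mul_sum]
    apply Finset.sum_congr rfl
    intro i _
    rw [smul_eq_mul, hcoe i]
    ring
  -- a is a zero divisor
  obtain ⟨r, hr0, hrf⟩ := Polynomial.notMem_nonZeroDivisors_iff.mp hfz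
  have hrc : ∀ i, r * f.coeff i = 0 := fun i => by
    have := congrArg (fun p => p.coeff i) hrf
    simpa [coeff_smul, smul_eq_mul] using this
  have hra : r * a = 0 := by
    rw [← hc, Finsupp.sum, Finset.mul_sum]
    apply Finset.sum_eq_zero
    intro i _
    rw [smul_eq_mul, ← mul_assoc, mul_comm r (c i), mul_assoc, hrc i, mul_zero]
  have haz : a ∉ nonZeroDivisors R := fun h => hr0 ((mem_nonZeroDivisors_iff.mp h).2 r hra)
  -- replace g by a regular polynomial
  set N : ℕ := g.natDegree + 1 with hN
  set h : R[X] := g + C (1 - t) * X ^ N with hh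
  have hfh : f = C a * h := by
    rw [hh, mul_add, ← mul_assoc, ← C_mul, mul_sub, mul_one, hat, sub_self, C_0,
      zero_mul, add_zero, hg]
  refine ⟨a, h, haz, ?_, hfh⟩
  rw [Polynomial.mem_nonZeroDivisors_iff]
  intro s hs
  have hco : ∀ i, s * h.coeff i = 0 := fun i => by
    have := congrArg (fun p => p.coeff i) hs
    simpa [coeff_smul, smul_eq_mul] using this
  have hgN : g.coeff N = 0 := g.coeff_eq_zero_of_natDegree_lt (Nat.lt_succ_self _)
  have hs1t : s * (1 - t) = 0 := by
    have := hco N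
    rwa [hh, coeff_add, coeff_C_mul, coeff_X_pow, if_pos rfl, mul_one, hgN, zero_add]
      at this
  have hsg : ∀ i, s * g.coeff i = 0 := by
    intro i
    by_cases hi : i ≤ g.natDegree
    · have hNi : ¬ i = N := by omega
      have := hco i
      rwa [hh, coeff_add, coeff_C_mul, coeff_X_pow, if_neg hNi, mul_zero, add_zero]
        at this
    · rw [g.coeff_eq_zero_of_natDegree_lt (lt_of_not_ge hi), mul_zero]
  have hst : s * t = 0 := by
    rw [ht, Finsupp.sum, Finset.mul_sum]
    apply Finset.sum_eq_zero
    intro i _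
    rw [← mul_assoc, mul_comm s (c i), mul_assoc, hsg i, mul_zero]
  have : s = s * t + s * (1 - t) := by ring
  rw [hst, hs1t, add_zero] at this
  exact this
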